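/- arXiv:2508.15363 — 5 statements merged into one kernel-verified Lean document; each statement's English description precedes it below -/
import Mathlib

section
/- If for each j = 1,...,n the p-value P_j satisfies Pr(P_j ≤ t) ≤ t for all t ∈ [0,1] whenever the hypothesis H_j is true, the P_j are mutually independent, and fewer than u of the hypotheses H_1,...,H_n are false, then the Bonferroni-combined statistic (n − u + 1)·P_(u), where P_(u) is the u-th order statistic of P_1,...,P_n, satisfies Pr((n − u + 1)·P_(u) ≤ t) ≤ t for all t ∈ [0,1]. -/
open MeasureTheory Finset

/-- Validity of the Bonferroni-combined PC p-value: if the `P j` are independent,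
valid under their true nulls, and fewer than `u` of the hypotheses are false,
then `Pr((n−u+1)·P_(u) ≤ t) ≤ t` for all `t ∈ [0,1]`. Here `Q` denotes the
order statistics of `P`: for each `ω`, `j ↦ Q j ω` is monotone and is a
rearrangement of `j ↦ P j ω`. -/
theorem stmt_0 {Ω : Type*} [MeasurableSpace Ω] (μ : Measure Ω)
    [IsProbabilityMeasure μ] (n : ℕ) (hn : 2 ≤ n) (u : ℕ) (hu2 : 2 ≤ u)
    (hun : u ≤ n)
    (P : Fin n → Ω → ℝ) (hPm : ∀ j, Measurable (P j))
    (hP01 : ∀ j ω, P j ω ∈ Set.Icc (0:ℝ) 1)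
    (trueH : Fin n → Prop) [DecidablePred trueH]
    (hvalid : ∀ j, trueH j → ∀ t ∈ Set.Icc (0:ℝ) 1,
      μ {ω | P j ω ≤ t} ≤ ENNReal.ofReal t)
    (hindep : ProbabilityTheory.iIndepFun P μ)
    (hPC : (Finset.univ.filter (fun j => ¬ trueH j)).card < u)
    (Q : Fin n → Ω → ℝ)
    (hQmono : ∀ ω, Monotone (fun j => Q j ω))
    (hQperm : ∀ ω, ∃ σ : Equiv.Perm (Fin n), ∀ j, Q j ω = P (σ j) ω) :
    ∀ t ∈ Set.Icc (0:ℝ) 1,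
      μ {ω | ((n : ℝ) - u + 1) * Q ⟨u - 1, by omega⟩ ω ≤ t} ≤ ENNReal.ofReal t := by
  intro t ht
  obtain ⟨ht0, ht1⟩ := ht
  set m : ℕ := n - u + 1 with hm
  have hm1 : 1 ≤ m := by omega
  have hmr : ((n : ℝ) - u + 1) = (m : ℝ) := by
    rw [hm]; push_cast [Nat.cast_sub hun]; ring
  have hmpos : (0 : ℝ) < m := by exact_mod_cast hm1
  set s : ℝ := t / m with hs
  have hs0 : 0 ≤ s := div_nonneg ht0 hmpos.le
  have hs1 : s ≤ 1 := le_trans (div_le_self ht0 (by exact_mod_cast hm1)) ht1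
  -- choose a set of m true nulls
  have hcard : m ≤ (univ.filter (fun j => trueH j)).card := by
    have h1 : (univ.filter (fun j => trueH j)).card
        + (univ.filter (fun j => ¬ trueH j)).card = n := by
      rw [Finset.card_filter_add_card_filter_not]
      simp
    omega
  obtain ⟨T', hsub, hcardT⟩ := Finset.exists_subset_card_eq hcard
  have hT' : ∀ j ∈ T', trueH j := fun j hj => (Finset.mem_filter.mp (hsub hj)).2
  -- inclusion of the event in a union
  have hsubset : {ω | ((n : ℝ) - u + 1) * Q ⟨u - 1, by omega⟩ ω ≤ t}
      ⊆ ⋃ j ∈ T', {ω | P j ω ≤ s} := by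
    intro ω hω
    simp only [Set.mem_setOf_eq] at hω
    have hQs : Q ⟨u - 1, by omega⟩ ω ≤ s := by
      rw [hs, le_div_iff₀ hmpos, mul_comm]
      rwa [hmr] at hω
    obtain ⟨σ, hσ⟩ := hQperm ω
    set A : Finset (Fin n) := (Finset.Iic (⟨u - 1, by omega⟩ : Fin n)).image σ with hA
    have hAcard : A.card = u := by
      rw [hA, Finset.card_image_of_injective _ σ.injective, Fin.card_Iic]
      simp; omega
    have hAP : ∀ k ∈ A, P k ω ≤ s := by
      intro k hk
      rw [hA, Finset.mem_image] at hk
      obtain ⟨j, hj, rfl⟩ := hk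
      have : Q j ω ≤ Q ⟨u - 1, by omega⟩ ω := hQmono ω (Finset.mem_Iic.mp hj)
      rw [hσ j] at this
      exact this.trans hQs
    have hinter : (A ∩ T').Nonempty := by
      rw [← Finset.card_pos]
      have h2 : (A ∩ T').card + (A ∪ T').card = A.card + T'.card :=
        Finset.card_inter_add_card_union A T'
      have h3 : (A ∪ T').card ≤ n := by
        simpa using Finset.card_le_card (Finset.subset_univ (A ∪ T'))
      omega
    obtain ⟨k, hk⟩ := hinter
    rw [Finset.mem_inter] at hk
    exact Set.mem_biUnion hk.2 (hAP k hk.1)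
  calc μ {ω | ((n : ℝ) - u + 1) * Q ⟨u - 1, by omega⟩ ω ≤ t}
      ≤ μ (⋃ j ∈ T', {ω | P j ω ≤ s}) := measure_mono hsubset
    _ ≤ ∑ j ∈ T', μ {ω | P j ω ≤ s} := measure_biUnion_finset_le T' _
    _ ≤ ∑ j ∈ T', ENNReal.ofReal s :=
        Finset.sum_le_sum fun j hj => hvalid j (hT' j hj) s ⟨hs0, hs1⟩
    _ = (m : ENNReal) * ENNReal.ofReal s := by
        rw [Finset.sum_const, hcardT]; simp [nsmul_eq_mul]
    _ = ENNReal.ofReal t := by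
        rw [← ENNReal.ofReal_natCast m, ← ENNReal.ofReal_mul (by positivity)]
        congr 1
        rw [hs]
        field_simp
end

section
/- For real numbers F_1,...,F_m in [0,1] and constants α ∈ [0,1], k ∈ ℕ, define t̂ = sup{ t ∈ [0, kα] : t · Σ_{ℓ=1}^m 1{F_ℓ < t} ≤ kα } and, for a fixed index i, t̂_i = sup{ t ∈ [0,1] : t · (1 + Σ_{ℓ≠i} 1{F_ℓ < t}) ≤ kα }. Then t̂_i ≤ t̂. -/
open Finset

/-- Leave-one-out AdaFilter threshold is no larger than the full threshold. -/
theorem stmt_1 (m : ℕ) (hm : 1 ≤ m) (F : Fin m → ℝ)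
    (hF : ∀ ℓ, F ℓ ∈ Set.Icc (0:ℝ) 1) (α : ℝ) (hα : α ∈ Set.Icc (0:ℝ) 1)
    (k : ℕ) (hk : 1 ≤ k) (i : Fin m) :
    sSup {t : ℝ | t ∈ Set.Icc (0:ℝ) 1 ∧
        t * (1 + ∑ ℓ ∈ Finset.univ.erase i, (if F ℓ < t then (1:ℝ) else 0)) ≤ k * α}
      ≤ sSup {t : ℝ | t ∈ Set.Icc (0:ℝ) (k * α) ∧
        t * (∑ ℓ : Fin m, (if F ℓ < t then (1:ℝ) else 0)) ≤ k * α} := by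
  have hkα : (0:ℝ) ≤ k * α := mul_nonneg (Nat.cast_nonneg k) hα.1
  apply csSup_le_csSup
  · exact ⟨k * α, fun t ht => ht.1.2⟩
  · exact ⟨0, ⟨le_refl 0, zero_le_one⟩, by simpa using hkα⟩
  · rintro t ⟨⟨ht0, ht1⟩, hle⟩
    have hS : (0:ℝ) ≤ ∑ ℓ ∈ Finset.univ.erase i, (if F ℓ < t then (1:ℝ) else 0) :=
      Finset.sum_nonneg fun ℓ _ => by positivity
    have htk : t ≤ k * α := by
      calc t = t * 1 := (mul_one t).symm
        _ ≤ t * (1 + ∑ ℓ ∈ Finset.univ.erase i, (if F ℓ < t then (1:ℝ) else 0)) := by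
            apply mul_le_mul_of_nonneg_left _ ht0; linarith
        _ ≤ k * α := hle
    refine ⟨⟨ht0, htk⟩, ?_⟩
    have hsplit : (∑ ℓ : Fin m, (if F ℓ < t then (1:ℝ) else 0))
        = (if F i < t then (1:ℝ) else 0)
          + ∑ ℓ ∈ Finset.univ.erase i, (if F ℓ < t then (1:ℝ) else 0) :=
      (Finset.add_sum_erase _ _ (Finset.mem_univ i)).symm
    rw [hsplit]
    refine le_trans (mul_le_mul_of_nonneg_left ?_ ht0) hle
    have : (if F i < t then (1:ℝ) else 0) ≤ 1 := by split <;> norm_num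
    linarith
end

section
/- Suppose the p-values (P_{ij}) for i = 1,...,m, j = 1,...,n are mutually independent and valid under their respective true nulls. Let S_i and F_i be the Bonferroni-combined PC p-value and the filtering p-value for feature i, let t̂ = sup{ t ∈ [0, kα] : t · Σ_{ℓ=1}^m 1{F_ℓ < t} ≤ kα }, and let R = { i : S_i < t̂ }. Then the k-FWER of R satisfies Pr( Σ_{i∈R} 1{H_i^{u/n} is true} ≥ k ) ≤ α · E[ π_0(t̂) ], where π_0(t̂) = (Σ_i 1{F_i < t̂}·1{H_i^{u/n} true}) / (Σ_i 1{F_i < t̂}) is the post-filter proportion of true PC nulls (interpreted as 0 when the denominator is 0). -/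
open MeasureTheory Finset
open scoped ENNReal

namespace AdaFilterAux

/-- The feasible set for the adaptive threshold. -/
def tauSet (K : ℝ) (C : ℝ → ℝ) : Set ℝ := {t | t ∈ Set.Icc 0 K ∧ t * C t ≤ K}

/-- The adaptive threshold. -/
noncomputable def tau (K : ℝ) (C : ℝ → ℝ) : ℝ := sSup (tauSet K C)

variable {K : ℝ} {C C₁ C₂ : ℝ → ℝ}

lemma zero_mem_tauSet (hK : 0 ≤ K) (C : ℝ → ℝ) : (0:ℝ) ∈ tauSet K C :=
  ⟨⟨le_rfl, hK⟩, by simp [hK]⟩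

lemma tauSet_nonempty (hK : 0 ≤ K) (C : ℝ → ℝ) : (tauSet K C).Nonempty :=
  ⟨0, zero_mem_tauSet hK C⟩

lemma tauSet_bddAbove (K : ℝ) (C : ℝ → ℝ) : BddAbove (tauSet K C) :=
  ⟨K, fun _ ht => ht.1.2⟩

lemma tau_nonneg (hK : 0 ≤ K) (C : ℝ → ℝ) : 0 ≤ tau K C :=
  le_csSup (tauSet_bddAbove K C) (zero_mem_tauSet hK C)

lemma tau_le (hK : 0 ≤ K) (C : ℝ → ℝ) : tau K C ≤ K :=
  csSup_le (tauSet_nonempty hK C) (fun _ ht => ht.1.2)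

/-- Left local constancy. -/
def LC (C : ℝ → ℝ) : Prop := ∀ t : ℝ, ∃ ε > 0, ∀ s, t - ε < s → s ≤ t → C s = C t

lemma tau_mul_le (hK : 0 ≤ K) (h0 : ∀ t, 0 ≤ C t) (hlc : LC C) :
    tau K C * C (tau K C) ≤ K := by
  by_contra h
  push_neg at h
  set τ := tau K C with hτ
  have hCpos : 0 < C τ := by
    rcases (h0 τ).lt_or_eq with h' | h'
    · exact h'
    · exfalso; rw [← h'] at h; simp at h; exact absurd h (not_lt.mpr hK)
  obtain ⟨ε, hε, hconst⟩ := hlc τ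
  set ε2 := (τ * C τ - K) / C τ with hε2
  have hε2pos : 0 < ε2 := div_pos (by linarith) hCpos
  have hlt : τ - min ε ε2 < sSup (tauSet K C) := by
    show τ - min ε ε2 < τ
    have : 0 < min ε ε2 := lt_min hε hε2pos; linarith
  obtain ⟨s, hs, hslt⟩ := exists_lt_of_lt_csSup (tauSet_nonempty hK C) hlt
  have hsle : s ≤ τ := le_csSup (tauSet_bddAbove K C) hs
  have hCs : C s = C τ := hconst s (by have := min_le_left ε ε2; linarith) hsle
  have hkey : ε2 * C τ = τ * C τ - K := div_mul_cancel₀ _ (ne_of_gt hCpos)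
  have hs2 : τ - ε2 < s := by have := min_le_right ε ε2; linarith
  have : K < s * C s := by
    rw [hCs]
    nlinarith [mul_lt_mul_of_pos_right hs2 hCpos]
  exact absurd hs.2 (not_le.mpr this)

lemma le_tau_iff (hK : 0 ≤ K) (hmono : Monotone C) (h0 : ∀ t, 0 ≤ C t) (hlc : LC C)
    {a : ℝ} (ha : 0 ≤ a) : a ≤ tau K C ↔ (a ≤ K ∧ a * C a ≤ K) := by
  constructor
  · intro h
    refine ⟨h.trans (tau_le hK C), ?_⟩
    calc a * C a ≤ tau K C * C (tau K C) :=
          mul_le_mul h (hmono h) (h0 a) (tau_nonneg hK C)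
      _ ≤ K := tau_mul_le hK h0 hlc
  · intro h
    exact le_csSup (tauSet_bddAbove K C) ⟨⟨ha, h.1⟩, h.2⟩

lemma tau_le_tau (hK : 0 ≤ K) (h : ∀ t ∈ Set.Icc (0:ℝ) K, C₁ t ≤ C₂ t) :
    tau K C₂ ≤ tau K C₁ := by
  refine csSup_le_csSup (tauSet_bddAbove K C₁) (tauSet_nonempty hK C₂) ?_
  rintro t ⟨ht1, ht2⟩
  exact ⟨ht1, le_trans (mul_le_mul_of_nonneg_left (h t ht1) ht1.1) ht2⟩

lemma le_tau_of (hK : 0 ≤ K) {t : ℝ} (h1 : t ∈ Set.Icc 0 K) (h2 : t * C t ≤ K) :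
    t ≤ tau K C := le_csSup (tauSet_bddAbove K C) ⟨h1, h2⟩

/-- left-constancy for threshold predicates -/
lemma lc_threshold (w t : ℝ) : ∃ ε > 0, ∀ s, t - ε < s → s ≤ t → ((w < s) ↔ (w < t)) := by
  by_cases h : w < t
  · exact ⟨t - w, by linarith, fun s hs hst => ⟨fun _ => h, fun _ => by linarith⟩⟩
  · exact ⟨1, one_pos, fun s hs hst => ⟨fun h' => absurd (lt_of_lt_of_le h' hst) h,
      fun h' => absurd h' h⟩⟩

/-- generic left-constancy for sums of indicators of left-constant predicates -/
lemma lc_sum {γ : Type*} (s : Finset γ) (p : γ → ℝ → Prop)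
    [∀ ℓ t, Decidable (p ℓ t)]
    (hlcp : ∀ ℓ ∈ s, ∀ t : ℝ, ∃ ε > 0, ∀ r, t - ε < r → r ≤ t → (p ℓ r ↔ p ℓ t)) :
    LC (fun t => ∑ ℓ ∈ s, if p ℓ t then (1:ℝ) else 0) := by
  intro t
  have hch : ∀ ℓ : γ, ∃ ε : ℝ, 0 < ε ∧ (ℓ ∈ s → ∀ r, t - ε < r → r ≤ t → (p ℓ r ↔ p ℓ t)) := by
    intro ℓ
    by_cases hℓ : ℓ ∈ s
    · obtain ⟨ε, hε, h⟩ := hlcp ℓ hℓ t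
      exact ⟨ε, hε, fun _ => h⟩
    · exact ⟨1, one_pos, fun h => absurd h hℓ⟩
  choose ε hεpos hεc using hch
  rcases s.eq_empty_or_nonempty with rfl | hne
  · exact ⟨1, one_pos, fun r _ _ => by simp⟩
  · refine ⟨s.inf' hne ε, ?_, ?_⟩
    · rw [gt_iff_lt, Finset.lt_inf'_iff]
      exact fun ℓ _ => hεpos ℓ
    · intro r hr hrt
      show (∑ ℓ ∈ s, if p ℓ r then (1:ℝ) else 0) = ∑ ℓ ∈ s, if p ℓ t then (1:ℝ) else 0
      refine Finset.sum_congr rfl (fun ℓ hℓ => ?_)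
      have h1 : t - ε ℓ < r := by
        have := Finset.inf'_le ε hℓ
        linarith
      exact if_congr (hεc ℓ hℓ r h1 hrt) rfl rfl

lemma LC.const_add {C : ℝ → ℝ} (c : ℝ) (h : LC C) : LC (fun t => c + C t) := by
  intro t
  obtain ⟨ε, hε, hc⟩ := h t
  exact ⟨ε, hε, fun s h1 h2 => by simp only [hc s h1 h2]⟩

lemma mono_sum {γ : Type*} (s : Finset γ) (p : γ → ℝ → Prop)
    [∀ ℓ t, Decidable (p ℓ t)]
    (hp : ∀ ℓ ∈ s, ∀ ⦃r t : ℝ⦄, r ≤ t → p ℓ r → p ℓ t) :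
    Monotone (fun t => ∑ ℓ ∈ s, if p ℓ t then (1:ℝ) else 0) := by
  intro r t hrt
  refine Finset.sum_le_sum fun ℓ hℓ => ?_
  by_cases h : p ℓ r
  · simp [h, hp ℓ hℓ hrt h]
  · simp only [h, if_false]
    positivity

lemma nonneg_sum {γ : Type*} (s : Finset γ) (p : γ → ℝ → Prop)
    [∀ ℓ t, Decidable (p ℓ t)] (t : ℝ) :
    0 ≤ ∑ ℓ ∈ s, if p ℓ t then (1:ℝ) else 0 :=
  Finset.sum_nonneg fun ℓ _ => by positivity

/-- Core lemma: if `X` is a valid p-value independent of `W`, then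
`μ({X < g(W)} ∩ {W ∈ E}) ≤ ∫ g(W)·1_E(W)`. -/
lemma core_bound {Ω : Type*} [MeasurableSpace Ω] (μ : Measure Ω) [IsProbabilityMeasure μ]
    {δ : Type*} [MeasurableSpace δ] (X : Ω → ℝ) (W : Ω → δ)
    (hX : Measurable X) (hW : Measurable W)
    (hXW : ProbabilityTheory.IndepFun W X μ)
    (g : δ → ℝ) (hg : Measurable g)
    (hval : ∀ c : ℝ, μ {ω | X ω < c} ≤ ENNReal.ofReal c)
    (E : Set δ) (hE : MeasurableSet E) :
    μ ({ω | X ω < g (W ω)} ∩ W ⁻¹' E)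
      ≤ ∫⁻ ω, ENNReal.ofReal (g (W ω)) * E.indicator (fun _ => (1:ℝ≥0∞)) (W ω) ∂μ := by
  haveI : IsProbabilityMeasure (μ.map X) := Measure.isProbabilityMeasure_map hX.aemeasurable
  haveI : IsProbabilityMeasure (μ.map W) := Measure.isProbabilityMeasure_map hW.aemeasurable
  have hmap : μ.map (fun ω => (W ω, X ω)) = (μ.map W).prod (μ.map X) :=
    (ProbabilityTheory.indepFun_iff_map_prod_eq_prod_map_map hW.aemeasurable
      hX.aemeasurable).mp hXW
  set Sp : Set (δ × ℝ) := {p | p.2 < g p.1 ∧ p.1 ∈ E} with hSpdef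
  have hSp : MeasurableSet Sp := by
    refine MeasurableSet.inter ?_ (measurable_fst hE)
    exact measurableSet_lt measurable_snd (hg.comp measurable_fst)
  have h1 : ({ω | X ω < g (W ω)} ∩ W ⁻¹' E) = (fun ω => (W ω, X ω)) ⁻¹' Sp := by
    ext ω; simp [hSpdef]
  rw [h1, ← Measure.map_apply (hW.prodMk hX) hSp, hmap, Measure.prod_apply hSp]
  have hb : ∀ w : δ, (μ.map X) (Prod.mk w ⁻¹' Sp)
      ≤ ENNReal.ofReal (g w) * E.indicator (fun _ => (1:ℝ≥0∞)) w := by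
    intro w
    by_cases hw : w ∈ E
    · have hpre : Prod.mk w ⁻¹' Sp = Set.Iio (g w) := by
        ext x; simp [hSpdef, hw]
      rw [hpre, Measure.map_apply hX measurableSet_Iio, Set.indicator_of_mem hw, mul_one]
      exact hval (g w)
    · have hpre : Prod.mk w ⁻¹' Sp = ∅ := by
        ext x; simp [hSpdef, hw]
      rw [hpre, Set.indicator_of_notMem hw, mul_zero]
      simp
  calc ∫⁻ w, (μ.map X) (Prod.mk w ⁻¹' Sp) ∂(μ.map W)
      ≤ ∫⁻ w, ENNReal.ofReal (g w) * E.indicator (fun _ => (1:ℝ≥0∞)) w ∂(μ.map W) :=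
        lintegral_mono hb
    _ = ∫⁻ ω, ENNReal.ofReal (g (W ω)) * E.indicator (fun _ => (1:ℝ≥0∞)) (W ω) ∂μ := by
        rw [lintegral_map ?_ hW]
        exact (hg.ennreal_ofReal).mul (measurable_const.indicator hE)

end AdaFilterAux

/-- AdaFilter-Bon `k`-FWER control: with independent valid p-values, the
`k`-FWER of `R = {i : S_i < t̂}` is at most `α · E[π₀(t̂)]`, where `π₀(t̂)` is the
post-filter proportion of true PC nulls. `Q i` denotes the order statistics of
the feature-`i` p-values `P i`. -/
theorem stmt_7 {Ω : Type*} [MeasurableSpace Ω] (μ : Measure Ω)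
    [IsProbabilityMeasure μ] (m n : ℕ) (hm : 1 < m) (hn : 2 ≤ n)
    (u : ℕ) (hu2 : 2 ≤ u) (hun : u ≤ n)
    (k : ℕ) (hk : 1 ≤ k) (α : ℝ) (hα : α ∈ Set.Icc (0:ℝ) 1)
    (P : Fin m → Fin n → Ω → ℝ) (hPm : ∀ i j, Measurable (P i j))
    (hP01 : ∀ i j ω, P i j ω ∈ Set.Icc (0:ℝ) 1)
    (trueH : Fin m → Fin n → Prop) [∀ i, DecidablePred (trueH i)]
    (hvalid : ∀ i j, trueH i j → ∀ t ∈ Set.Icc (0:ℝ) 1,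
      μ {ω | P i j ω ≤ t} ≤ ENNReal.ofReal t)
    (hindep : ProbabilityTheory.iIndepFun
      (fun (p : Fin m × Fin n) ω => P p.1 p.2 ω) μ)
    (Q : Fin m → Fin n → Ω → ℝ)
    (hQmono : ∀ i ω, Monotone (fun j => Q i j ω))
    (hQperm : ∀ i ω, ∃ σ : Equiv.Perm (Fin n), ∀ j, Q i j ω = P i (σ j) ω)
    (S F : Fin m → Ω → ℝ)
    (hSdef : ∀ i ω, S i ω = ((n : ℝ) - u + 1) * Q i ⟨u - 1, by omega⟩ ω)
    (hFdef : ∀ i ω, F i ω = ((n : ℝ) - u + 1) * Q i ⟨u - 2, by omega⟩ ω)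
    (that : Ω → ℝ)
    (hthat : ∀ ω, that ω = sSup {t : ℝ | t ∈ Set.Icc (0:ℝ) (k * α) ∧
        t * (∑ ℓ : Fin m, (if F ℓ ω < t then (1:ℝ) else 0)) ≤ k * α})
    (PCtrue : Fin m → Prop) [DecidablePred PCtrue]
    (hPC : ∀ i, PCtrue i ↔ (Finset.univ.filter (fun j => ¬ trueH i j)).card < u)
    (π₀ : Ω → ℝ)
    (hπ₀ : ∀ ω, π₀ ω =
        (∑ i : Fin m, (if F i ω < that ω ∧ PCtrue i then (1:ℝ) else 0)) /
          (∑ i : Fin m, (if F i ω < that ω then (1:ℝ) else 0))) :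
    μ {ω | (k : ℝ) ≤ ∑ i : Fin m,
        (if S i ω < that ω ∧ PCtrue i then (1:ℝ) else 0)} ≤
      ENNReal.ofReal (α * ∫ ω, π₀ ω ∂μ) := by
  classical
  obtain ⟨hα0, hα1⟩ := hα
  have hun' : (u : ℝ) ≤ (n : ℝ) := by exact_mod_cast hun
  set β : ℝ := (n : ℝ) - u + 1 with hβdef
  have hβpos : 0 < β := by rw [hβdef]; linarith
  have hβnat : ((n - u + 1 : ℕ) : ℝ) = β := by
    rw [hβdef, Nat.cast_add, Nat.cast_sub hun, Nat.cast_one]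
  set K : ℝ := (k : ℝ) * α with hKdef
  have hK : 0 ≤ K := mul_nonneg (Nat.cast_nonneg k) hα0
  have hP0 : ∀ i j ω, 0 ≤ P i j ω := fun i j ω => (hP01 i j ω).1
  -- order statistics vs counts
  have hQcnt : ∀ (i : Fin m) (ω : Ω) (c : ℝ) (r : ℕ) (hr : r < n),
      (Q i ⟨r, hr⟩ ω < c ↔ r + 1 ≤ (univ.filter fun j => P i j ω < c).card) := by
    intro i ω c r hr
    obtain ⟨σ, hσ⟩ := hQperm i ω
    have hcard : (univ.filter fun jj => Q i jj ω < c).card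
        = (univ.filter fun j => P i j ω < c).card := by
      apply Finset.card_bij (fun a _ => σ a)
      · intro a ha
        simp only [mem_filter, mem_univ, true_and] at ha ⊢
        rwa [← hσ a]
      · intro a _ b _ hab
        exact σ.injective hab
      · intro b hb
        refine ⟨σ.symm b, ?_, by simp⟩
        simp only [mem_filter, mem_univ, true_and] at hb ⊢
        rw [hσ (σ.symm b), Equiv.apply_symm_apply]
        exact hb
    rw [← hcard]
    constructor
    · intro h
      have hsub : Finset.Iic (⟨r, hr⟩ : Fin n) ⊆ univ.filter fun jj => Q i jj ω < c := by
        intro j hj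
        simp only [Finset.mem_Iic] at hj
        simp only [mem_filter, mem_univ, true_and]
        exact lt_of_le_of_lt (hQmono i ω hj) h
      have hcc := Finset.card_le_card hsub
      rwa [Fin.card_Iic] at hcc
    · intro h
      by_contra hlt
      push_neg at hlt
      have hsub : (univ.filter fun jj => Q i jj ω < c) ⊆ Finset.Iio (⟨r, hr⟩ : Fin n) := by
        intro j hj
        simp only [mem_filter, mem_univ, true_and] at hj
        simp only [Finset.mem_Iio]
        by_contra hge
        push_neg at hge
        exact absurd (lt_of_le_of_lt (hQmono i ω hge) hj) (not_lt.mpr hlt)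
      have hcc := Finset.card_le_card hsub
      rw [Fin.card_Iio] at hcc
      have hv : ((⟨r, hr⟩ : Fin n) : ℕ) = r := rfl
      omega
  have hScnt : ∀ (i : Fin m) (ω : Ω) (t : ℝ),
      (S i ω < t ↔ u ≤ (univ.filter fun j => P i j ω < t / β).card) := by
    intro i ω t
    rw [hSdef i ω, mul_comm, ← lt_div_iff₀ hβpos,
      hQcnt i ω (t / β) (u - 1) (by omega)]
    constructor <;> (intro h; omega)
  have hFcnt : ∀ (i : Fin m) (ω : Ω) (t : ℝ),
      (F i ω < t ↔ u - 1 ≤ (univ.filter fun j => P i j ω < t / β).card) := by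
    intro i ω t
    rw [hFdef i ω, mul_comm, ← lt_div_iff₀ hβpos,
      hQcnt i ω (t / β) (u - 2) (by omega)]
    constructor <;> (intro h; omega)
  have hFS : ∀ i ω, F i ω ≤ S i ω := by
    intro i ω
    rw [hFdef i ω, hSdef i ω]
    refine mul_le_mul_of_nonneg_left (hQmono i ω ?_) hβpos.le
    exact Fin.mk_le_mk.mpr (by omega)
  -- measurability of Q, S, F
  have hQmeas : ∀ (i : Fin m) (r : ℕ) (hr : r < n), Measurable fun ω => Q i ⟨r, hr⟩ ω := by
    intro i r hr
    apply measurable_of_Iio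
    intro c
    have hset : (fun ω => Q i ⟨r, hr⟩ ω) ⁻¹' Set.Iio c
        = {ω | ((r : ℝ) + 1) ≤ ∑ j : Fin n, if P i j ω < c then (1:ℝ) else 0} := by
      ext ω
      simp only [Set.mem_preimage, Set.mem_Iio, Set.mem_setOf_eq, hQcnt i ω c r hr,
        Finset.sum_boole]
      exact_mod_cast Iff.rfl
    rw [hset]
    exact measurableSet_le measurable_const (Finset.measurable_sum _ fun j _ =>
      Measurable.ite (measurableSet_lt (hPm i j) measurable_const)
        measurable_const measurable_const)
  have hSmeas : ∀ i, Measurable (S i) := by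
    intro i
    have : S i = fun ω => β * Q i ⟨u - 1, by omega⟩ ω := funext fun ω => hSdef i ω
    rw [this]
    exact (hQmeas i (u - 1) (by omega)).const_mul β
  have hFmeas : ∀ i, Measurable (F i) := by
    intro i
    have : F i = fun ω => β * Q i ⟨u - 2, by omega⟩ ω := funext fun ω => hFdef i ω
    rw [this]
    exact (hQmeas i (u - 2) (by omega)).const_mul β
  -- the count function for `that`
  set Cb : Ω → ℝ → ℝ := fun ω t => ∑ ℓ : Fin m, if F ℓ ω < t then (1:ℝ) else 0 with hCbdef
  have hCbmono : ∀ ω, Monotone (Cb ω) := fun ω =>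
    AdaFilterAux.mono_sum univ (fun ℓ t => F ℓ ω < t) (fun ℓ _ r t hrt h => h.trans_le hrt)
  have hCb0 : ∀ ω t, 0 ≤ Cb ω t := fun ω t =>
    AdaFilterAux.nonneg_sum univ (fun ℓ t => F ℓ ω < t) t
  have hCblc : ∀ ω, AdaFilterAux.LC (Cb ω) := fun ω =>
    AdaFilterAux.lc_sum univ (fun ℓ t => F ℓ ω < t)
      (fun ℓ _ t => AdaFilterAux.lc_threshold (F ℓ ω) t)
  have hthat_eq : ∀ ω, that ω = AdaFilterAux.tau K (Cb ω) := by
    intro ω; rw [hthat ω]; rfl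
  have hthat0 : ∀ ω, 0 ≤ that ω := fun ω => by
    rw [hthat_eq ω]; exact AdaFilterAux.tau_nonneg hK _
  have hthatK : ∀ ω, that ω ≤ K := fun ω => by
    rw [hthat_eq ω]; exact AdaFilterAux.tau_le hK _
  have hattain : ∀ ω, that ω * Cb ω (that ω) ≤ K := fun ω => by
    rw [hthat_eq ω]; exact AdaFilterAux.tau_mul_le hK (hCb0 ω) (hCblc ω)
  have hCbmeas : ∀ t : ℝ, Measurable fun ω => Cb ω t := by
    intro t
    exact Finset.measurable_sum _ fun ℓ _ =>
      Measurable.ite (measurableSet_lt (hFmeas ℓ) measurable_const)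
        measurable_const measurable_const
  have hthatmeas : Measurable that := by
    apply measurable_of_Ici
    intro a
    rcases le_or_gt a 0 with ha | ha
    · have : that ⁻¹' Set.Ici a = Set.univ := by
        ext ω; simp only [Set.mem_preimage, Set.mem_Ici, Set.mem_univ, iff_true]
        exact ha.trans (hthat0 ω)
      rw [this]; exact MeasurableSet.univ
    · have : that ⁻¹' Set.Ici a = {ω | a ≤ K} ∩ {ω | a * Cb ω a ≤ K} := by
        ext ω
        simp only [Set.mem_preimage, Set.mem_Ici, Set.mem_inter_iff, Set.mem_setOf_eq]
        rw [hthat_eq ω]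
        exact AdaFilterAux.le_tau_iff hK (hCbmono ω) (hCb0 ω) (hCblc ω) ha.le
      rw [this]
      exact (MeasurableSet.const _).inter
        (measurableSet_le ((hCbmeas a).const_mul a) measurable_const)
  -- the leave-one-out thresholds
  set Ci : Fin m → Ω → ℝ → ℝ := fun i ω t =>
    1 + ∑ ℓ ∈ univ.erase i, if F ℓ ω < t then (1:ℝ) else 0 with hCidef
  set Tb : Fin m → Ω → ℝ := fun i ω => AdaFilterAux.tau K (Ci i ω) with hTbdef
  have hCbCi : ∀ (i : Fin m) ω t, Cb ω t ≤ Ci i ω t := by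
    intro i ω t
    have h := Finset.add_sum_erase univ (fun ℓ => if F ℓ ω < t then (1:ℝ) else 0) (mem_univ i)
    show (∑ ℓ : Fin m, if F ℓ ω < t then (1:ℝ) else 0)
      ≤ 1 + ∑ ℓ ∈ univ.erase i, if F ℓ ω < t then (1:ℝ) else 0
    rw [← h]
    have : (if F i ω < t then (1:ℝ) else 0) ≤ 1 := by split <;> norm_num
    linarith
  have hTble : ∀ i ω, Tb i ω ≤ that ω := by
    intro i ω
    rw [hthat_eq ω]
    exact AdaFilterAux.tau_le_tau hK (fun t _ => hCbCi i ω t)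
  have hthatTb : ∀ i ω, F i ω < that ω → that ω = Tb i ω := by
    intro i ω h
    refine le_antisymm ?_ (hTble i ω)
    refine AdaFilterAux.le_tau_of hK ⟨hthat0 ω, hthatK ω⟩ ?_
    have hCeq : Ci i ω (that ω) = Cb ω (that ω) := by
      show (1 + ∑ ℓ ∈ univ.erase i, if F ℓ ω < that ω then (1:ℝ) else 0)
        = ∑ ℓ : Fin m, if F ℓ ω < that ω then (1:ℝ) else 0
      rw [← Finset.add_sum_erase univ (fun ℓ => if F ℓ ω < that ω then (1:ℝ) else 0)
        (mem_univ i), if_pos h]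
    rw [hCeq]
    exact hattain ω
  -- vector-space versions (for independence)
  set Cv : Fin m → ((Fin m × Fin n) → ℝ) → ℝ → ℝ := fun i v t =>
    1 + ∑ ℓ ∈ univ.erase i,
      if u - 1 ≤ (univ.filter fun j' => v (ℓ, j') < t / β).card then (1:ℝ) else 0 with hCvdef
  set g0 : Fin m → ((Fin m × Fin n) → ℝ) → ℝ := fun i v => AdaFilterAux.tau K (Cv i v)
    with hg0def
  have hlcCount : ∀ (v' : Fin n → ℝ) (r : ℕ) (t : ℝ), ∃ ε > 0, ∀ s, t - ε < s → s ≤ t →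
      ((r ≤ (univ.filter fun j' => v' j' < s / β).card) ↔
        (r ≤ (univ.filter fun j' => v' j' < t / β).card)) := by
    intro v' r t
    have key : ∀ j' : Fin n, ∃ ε : ℝ, 0 < ε ∧ ∀ s, t - ε < s → s ≤ t →
        ((v' j' < s / β) ↔ (v' j' < t / β)) := by
      intro j'
      obtain ⟨ε, hε, hc⟩ := AdaFilterAux.lc_threshold (β * v' j') t
      refine ⟨ε, hε, fun s h1 h2 => ?_⟩
      rw [lt_div_iff₀ hβpos, lt_div_iff₀ hβpos, mul_comm (v' j') β]
      exact hc s h1 h2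
    choose ε hεpos hεc using key
    have huniv : (univ : Finset (Fin n)).Nonempty := ⟨⟨0, by omega⟩, mem_univ _⟩
    refine ⟨(univ : Finset (Fin n)).inf' huniv ε, ?_, ?_⟩
    · rw [gt_iff_lt, Finset.lt_inf'_iff]
      exact fun j' _ => hεpos j'
    · intro s h1 h2
      have hfe : (univ.filter fun j' => v' j' < s / β)
          = univ.filter fun j' => v' j' < t / β := by
        refine Finset.filter_congr (fun j' _ => ?_)
        refine hεc j' s ?_ h2
        have := Finset.inf'_le ε (mem_univ j')
        linarith
      rw [hfe]
  have hCvmono : ∀ i v, Monotone (Cv i v) := by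
    intro i v
    have := AdaFilterAux.mono_sum (univ.erase i)
      (fun ℓ t => u - 1 ≤ (univ.filter fun j' => v (ℓ, j') < t / β).card)
      (fun ℓ _ r t hrt h => by
        refine le_trans h (Finset.card_le_card ?_)
        intro x hx
        simp only [mem_filter, mem_univ, true_and] at hx ⊢
        refine lt_of_lt_of_le hx ?_
        gcongr)

    exact Monotone.const_add this 1
  have hCv0 : ∀ i v t, 0 ≤ Cv i v t := by
    intro i v t
    have := AdaFilterAux.nonneg_sum (univ.erase i)
      (fun ℓ t => u - 1 ≤ (univ.filter fun j' => v (ℓ, j') < t / β).card) t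
    show (0:ℝ) ≤ 1 + _
    linarith
  have hCvlc : ∀ i v, AdaFilterAux.LC (Cv i v) := by
    intro i v
    exact AdaFilterAux.LC.const_add 1
      (AdaFilterAux.lc_sum (univ.erase i)
        (fun ℓ t => u - 1 ≤ (univ.filter fun j' => v (ℓ, j') < t / β).card)
        (fun ℓ _ t => hlcCount (fun j' => v (ℓ, j')) (u - 1) t))
  have hg0nn : ∀ i v, 0 ≤ g0 i v := fun i v => AdaFilterAux.tau_nonneg hK _
  have hcntMeasV : ∀ (c : ℝ) (ℓ : Fin m) (r : ℕ),
      MeasurableSet {v : (Fin m × Fin n) → ℝ |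
        r ≤ (univ.filter fun j' => v (ℓ, j') < c).card} := by
    intro c ℓ r
    have hset : {v : (Fin m × Fin n) → ℝ | r ≤ (univ.filter fun j' => v (ℓ, j') < c).card}
        = {v | (r : ℝ) ≤ ∑ j' : Fin n, if v (ℓ, j') < c then (1:ℝ) else 0} := by
      ext v
      simp only [Set.mem_setOf_eq, Finset.sum_boole]
      exact_mod_cast Iff.rfl
    rw [hset]
    exact measurableSet_le measurable_const (Finset.measurable_sum _ fun j' _ =>
      Measurable.ite (measurableSet_lt (measurable_pi_apply _) measurable_const)
        measurable_const measurable_const)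
  have hCvmeas : ∀ (i : Fin m) (t : ℝ), Measurable fun v => Cv i v t := by
    intro i t
    apply Measurable.const_add
    exact Finset.measurable_sum _ fun ℓ _ =>
      Measurable.ite (hcntMeasV (t / β) ℓ (u - 1)) measurable_const measurable_const
  have hg0meas : ∀ i, Measurable (g0 i) := by
    intro i
    apply measurable_of_Ici
    intro a
    rcases le_or_gt a 0 with ha | ha
    · have : (g0 i) ⁻¹' Set.Ici a = Set.univ := by
        ext v; simp only [Set.mem_preimage, Set.mem_Ici, Set.mem_univ, iff_true]
        exact ha.trans (hg0nn i v)
      rw [this]; exact MeasurableSet.univ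
    · have : (g0 i) ⁻¹' Set.Ici a = {v | a ≤ K} ∩ {v | a * Cv i v a ≤ K} := by
        ext v
        simp only [Set.mem_preimage, Set.mem_Ici, Set.mem_inter_iff, Set.mem_setOf_eq]
        exact AdaFilterAux.le_tau_iff hK (hCvmono i v) (hCv0 i v) (hCvlc i v) ha.le
      rw [this]
      exact (MeasurableSet.const _).inter
        (measurableSet_le ((hCvmeas i a).const_mul a) measurable_const)
  -- measurable events
  have hSev : ∀ i, MeasurableSet {ω | S i ω < that ω} := fun i =>
    measurableSet_lt (hSmeas i) hthatmeas
  have hFev : ∀ i, MeasurableSet {ω | F i ω < that ω} := fun i =>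
    measurableSet_lt (hFmeas i) hthatmeas
  have hSevPC : ∀ i, MeasurableSet {ω | S i ω < that ω ∧ PCtrue i} := by
    intro i
    exact (hSev i).inter (MeasurableSet.const _)
  have hFevPC : ∀ i, MeasurableSet {ω | F i ω < that ω ∧ PCtrue i} := by
    intro i
    exact (hFev i).inter (MeasurableSet.const _)
  -- the key per-feature bound
  have hmain : ∀ i : Fin m, μ {ω | S i ω < that ω ∧ PCtrue i}
      ≤ ∫⁻ ω, ENNReal.ofReal (that ω) *
          ({ω | F i ω < that ω ∧ PCtrue i}).indicator (fun _ => (1:ℝ≥0∞)) ω ∂μ := by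
    intro i
    by_cases hPCi : PCtrue i
    swap
    · have : {ω | S i ω < that ω ∧ PCtrue i} = ∅ := by
        ext ω; simp [hPCi]
      rw [this]; simp
    have hSset : {ω | S i ω < that ω ∧ PCtrue i} = {ω | S i ω < that ω} := by
      ext ω; simp [hPCi]
    have hFset : {ω | F i ω < that ω ∧ PCtrue i} = {ω | F i ω < that ω} := by
      ext ω; simp [hPCi]
    rw [hSset, hFset]
    -- a set of n - u + 1 true nulls
    have hcardtrue : n - u + 1 ≤ (univ.filter fun j => trueH i j).card := by
      have h1 := Finset.card_filter_add_card_filter_not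
        (s := (univ : Finset (Fin n))) (p := trueH i)
      rw [Finset.card_univ, Fintype.card_fin] at h1
      have h1' : (univ.filter (fun j => trueH i j)).card
          + (univ.filter (fun j => ¬ trueH i j)).card = n := h1
      have h2 : (univ.filter fun j => ¬ trueH i j).card < u := (hPC i).mp hPCi
      omega
    obtain ⟨Ts, hTsub, hTcard⟩ := Finset.exists_subset_card_eq hcardtrue
    set Bev : Fin n → Set Ω := fun j => {ω | P i j ω < Tb i ω / β ∧
        u - 1 ≤ (univ.filter fun j' => j' ≠ j ∧ P i j' ω < Tb i ω / β).card} with hBdef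
    have hincl : {ω | S i ω < that ω} ⊆ ⋃ j ∈ Ts, Bev j := by
      intro ω hω
      simp only [Set.mem_setOf_eq] at hω
      have hFi : F i ω < that ω := lt_of_le_of_lt (hFS i ω) hω
      have hTeq : that ω = Tb i ω := hthatTb i ω hFi
      have hSi : S i ω < Tb i ω := hTeq ▸ hω
      have hA : u ≤ (univ.filter fun j' => P i j' ω < Tb i ω / β).card := (hScnt i ω _).mp hSi
      set A := univ.filter fun j' => P i j' ω < Tb i ω / β with hAdef
      have hinter : 1 ≤ (A ∩ Ts).card := by
        have h4 := Finset.card_union_add_card_inter A Ts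
        have h5 : (A ∪ Ts).card ≤ n := le_trans (Finset.card_le_univ _) (by simp)
        omega
      obtain ⟨j, hj⟩ := Finset.card_pos.mp hinter
      have hjA : j ∈ A := (Finset.mem_inter.mp hj).1
      have hjT : j ∈ Ts := (Finset.mem_inter.mp hj).2
      refine Set.mem_biUnion hjT ?_
      refine ⟨(Finset.mem_filter.mp hjA).2, ?_⟩
      have hsub : A.erase j ⊆ univ.filter fun j' => j' ≠ j ∧ P i j' ω < Tb i ω / β := by
        intro x hx
        rcases Finset.mem_erase.mp hx with ⟨hx1, hx2⟩
        exact Finset.mem_filter.mpr ⟨mem_univ _, hx1, (Finset.mem_filter.mp hx2).2⟩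
      have hcc := Finset.card_le_card hsub
      rw [Finset.card_erase_of_mem hjA] at hcc
      omega
    have hjb : ∀ j ∈ Ts, μ (Bev j) ≤ ∫⁻ ω, ENNReal.ofReal (that ω / β) *
        ({ω | F i ω < that ω}).indicator (fun _ => (1:ℝ≥0∞)) ω ∂μ := by
      intro j hjT
      have htrue_j : trueH i j := (Finset.mem_filter.mp (hTsub hjT)).2
      -- the vector of all other p-values
      set W : Ω → (Fin m × Fin n) → ℝ := fun ω p =>
        if h : p ∈ (univ.erase (i, j) : Finset (Fin m × Fin n)) then P p.1 p.2 ω else 0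
        with hWdef
      have hWval : ∀ ω (p : Fin m × Fin n), p ≠ (i, j) → W ω p = P p.1 p.2 ω := by
        intro ω p hp
        show (if h : p ∈ (univ.erase (i, j) : Finset (Fin m × Fin n))
          then P p.1 p.2 ω else 0) = P p.1 p.2 ω
        rw [dif_pos (Finset.mem_erase.mpr ⟨hp, mem_univ _⟩)]
      have hWmeas : Measurable W := by
        apply measurable_pi_lambda
        intro p
        by_cases h : p ∈ (univ.erase (i, j) : Finset (Fin m × Fin n))
        · have : (fun ω => W ω p) = fun ω => P p.1 p.2 ω := by
            funext ω; exact hWval ω p (Finset.mem_erase.mp h).1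
          rw [this]; exact hPm p.1 p.2
        · have : (fun ω => W ω p) = fun _ => (0:ℝ) := by
            funext ω
            show (if h : p ∈ (univ.erase (i, j) : Finset (Fin m × Fin n))
              then P p.1 p.2 ω else 0) = 0
            rw [dif_neg h]
          rw [this]; exact measurable_const
      have hXW : ProbabilityTheory.IndepFun W (fun ω => P i j ω) μ := by
        have h1 := hindep.indepFun_finset (univ.erase (i, j)) {(i, j)}
          (by simp) (fun p => hPm p.1 p.2)
        have h2 := h1.comp
          (φ := fun (w : ((univ.erase (i, j) : Finset (Fin m × Fin n))) → ℝ)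
              (p : Fin m × Fin n) =>
            if h : p ∈ (univ.erase (i, j) : Finset (Fin m × Fin n)) then w ⟨p, h⟩ else 0)
          (ψ := fun (w : (({(i, j)} : Finset (Fin m × Fin n))) → ℝ) =>
            w ⟨(i, j), Finset.mem_singleton_self _⟩)
          (by
            apply measurable_pi_lambda
            intro p
            by_cases h : p ∈ (univ.erase (i, j) : Finset (Fin m × Fin n))
            · simp only [dif_pos h]
              exact measurable_pi_apply _
            · simp only [dif_neg h]
              exact measurable_const)
          (_mγ' := inferInstance) (measurable_pi_apply _)
        exact h2
      -- identify g0 on W with Tb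
      have hg0W : ∀ ω, g0 i (W ω) = Tb i ω := by
        intro ω
        show AdaFilterAux.tau K (Cv i (W ω)) = AdaFilterAux.tau K (Ci i ω)
        congr 1
        funext t
        show (1 + ∑ ℓ ∈ univ.erase i,
            if u - 1 ≤ (univ.filter fun j' => W ω (ℓ, j') < t / β).card then (1:ℝ) else 0)
          = 1 + ∑ ℓ ∈ univ.erase i, if F ℓ ω < t then (1:ℝ) else 0
        congr 1
        refine Finset.sum_congr rfl (fun ℓ hℓ => ?_)
        have hℓi : ℓ ≠ i := (Finset.mem_erase.mp hℓ).1
        have hflt : (univ.filter fun j' => W ω (ℓ, j') < t / β)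
            = univ.filter fun j' => P ℓ j' ω < t / β := by
          refine Finset.filter_congr (fun j' _ => ?_)
          rw [hWval ω (ℓ, j') (by simp [hℓi])]
        rw [hflt]
        exact if_congr (hFcnt ℓ ω t).symm rfl rfl
      -- the event E on the vector space
      set Ev : Set ((Fin m × Fin n) → ℝ) := {v | u - 1 ≤ (univ.filter fun j' =>
          j' ≠ j ∧ v (i, j') < g0 i v / β).card} with hEvdef
      have hEvmeas : MeasurableSet Ev := by
        have hsetm : ∀ j' : Fin n, MeasurableSet
            {v : (Fin m × Fin n) → ℝ | j' ≠ j ∧ v (i, j') < g0 i v / β} := by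
          intro j'
          by_cases hjj : j' = j
          · have : {v : (Fin m × Fin n) → ℝ | j' ≠ j ∧ v (i, j') < g0 i v / β} = ∅ := by
              ext v; simp [hjj]
            rw [this]; exact MeasurableSet.empty
          · have : {v : (Fin m × Fin n) → ℝ | j' ≠ j ∧ v (i, j') < g0 i v / β}
                = {v | v (i, j') < g0 i v / β} := by
              ext v; simp [hjj]
            rw [this]
            exact measurableSet_lt (measurable_pi_apply _) ((hg0meas i).div_const β)
        have hset : Ev = {v | ((u - 1 : ℕ) : ℝ) ≤ ∑ j' : Fin n,
            if j' ≠ j ∧ v (i, j') < g0 i v / β then (1:ℝ) else 0} := by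
          ext v
          rw [hEvdef]
          simp only [Set.mem_setOf_eq, Finset.sum_boole]
          exact_mod_cast Iff.rfl
        rw [hset]
        exact measurableSet_le measurable_const (Finset.measurable_sum _ fun j' _ =>
          Measurable.ite (hsetm j') measurable_const measurable_const)
      -- validity of the p-value P i j
      have hval : ∀ c : ℝ, μ {ω | P i j ω < c} ≤ ENNReal.ofReal c := by
        intro c
        rcases lt_or_ge c 0 with hc | hc
        · have : {ω | P i j ω < c} = ∅ := by
            ext ω
            simp only [Set.mem_setOf_eq, Set.mem_empty_iff_false, iff_false, not_lt]
            exact hc.le.trans (hP0 i j ω)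
          rw [this]; simp
        · rcases le_or_gt c 1 with hc1 | hc1
          · refine le_trans (measure_mono ?_) (hvalid i j htrue_j c ⟨hc, hc1⟩)
            intro ω hω
            simp only [Set.mem_setOf_eq] at hω ⊢
            exact hω.le
          · calc μ {ω | P i j ω < c} ≤ μ Set.univ := measure_mono (Set.subset_univ _)
              _ = 1 := measure_univ
              _ ≤ ENNReal.ofReal c := by
                  rw [← ENNReal.ofReal_one]
                  exact ENNReal.ofReal_le_ofReal hc1.le
      -- identify Bev j as the core event
      have hfilterW : ∀ ω (c : ℝ), (univ.filter fun j' => j' ≠ j ∧ W ω (i, j') < c)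
          = univ.filter fun j' => j' ≠ j ∧ P i j' ω < c := by
        intro ω c
        refine Finset.filter_congr (fun j' _ => ?_)
        by_cases hjj : j' = j
        · simp [hjj]
        · rw [hWval ω (i, j') (by simp [hjj])]
      have hpre : Bev j = {ω | P i j ω < (fun v => g0 i v / β) (W ω)} ∩ W ⁻¹' Ev := by
        ext ω
        simp only [hBdef, Set.mem_setOf_eq, Set.mem_inter_iff, Set.mem_preimage, hEvdef]
        rw [hg0W ω, hfilterW ω (Tb i ω / β)]
      have hcore := AdaFilterAux.core_bound μ (fun ω => P i j ω) W (hPm i j) hWmeas hXW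
        (fun v => g0 i v / β) ((hg0meas i).div_const β) hval Ev hEvmeas
      rw [← hpre] at hcore
      refine le_trans hcore (lintegral_mono ?_)
      intro ω
      dsimp only
      by_cases hω : W ω ∈ Ev
      · rw [Set.indicator_of_mem hω]
        have h1 : u - 1 ≤ (univ.filter fun j' => j' ≠ j ∧ P i j' ω < Tb i ω / β).card := by
          have := hω
          rw [hEvdef] at this
          simp only [Set.mem_setOf_eq] at this
          rwa [hg0W ω, hfilterW ω (Tb i ω / β)] at this
        have hcard : u - 1 ≤ (univ.filter fun j' => P i j' ω < Tb i ω / β).card := by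
          refine le_trans h1 (Finset.card_le_card ?_)
          intro x hx
          exact Finset.mem_filter.mpr ⟨mem_univ _, (Finset.mem_filter.mp hx).2.2⟩
        have hFi : F i ω < Tb i ω := (hFcnt i ω _).mpr hcard
        have hFith : F i ω < that ω := lt_of_lt_of_le hFi (hTble i ω)
        rw [Set.indicator_of_mem (show ω ∈ {ω | F i ω < that ω} from hFith), mul_one, mul_one]
        apply ENNReal.ofReal_le_ofReal
        rw [hg0W ω]
        gcongr
        exact hTble i ω
      · rw [Set.indicator_of_notMem hω, mul_zero]
        exact zero_le
    calc μ {ω | S i ω < that ω} ≤ μ (⋃ j ∈ Ts, Bev j) := measure_mono hincl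
      _ ≤ ∑ j ∈ Ts, μ (Bev j) := measure_biUnion_finset_le Ts Bev
      _ ≤ ∑ _j ∈ Ts, ∫⁻ ω, ENNReal.ofReal (that ω / β) *
            ({ω | F i ω < that ω}).indicator (fun _ => (1:ℝ≥0∞)) ω ∂μ :=
          Finset.sum_le_sum hjb
      _ = (n - u + 1 : ℕ) * ∫⁻ ω, ENNReal.ofReal (that ω / β) *
            ({ω | F i ω < that ω}).indicator (fun _ => (1:ℝ≥0∞)) ω ∂μ := by
          rw [Finset.sum_const, hTcard, nsmul_eq_mul]
      _ = ∫⁻ ω, ENNReal.ofReal (that ω) *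
            ({ω | F i ω < that ω}).indicator (fun _ => (1:ℝ≥0∞)) ω ∂μ := by
          rw [← lintegral_const_mul _ (f := fun ω => ENNReal.ofReal (that ω / β) *
              ({ω | F i ω < that ω}).indicator (fun _ => (1:ℝ≥0∞)) ω)
            ((hthatmeas.div_const β).ennreal_ofReal.mul
            (measurable_const.indicator (hFev i)))]
          congr 1
          funext ω
          rw [← mul_assoc]
          congr 1
          rw [show ((n - u + 1 : ℕ) : ℝ≥0∞) = ENNReal.ofReal β by
            rw [← hβnat, ENNReal.ofReal_natCast]]
          rw [← ENNReal.ofReal_mul hβpos.le]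
          congr 1
          rw [mul_comm, div_mul_cancel₀ _ (ne_of_gt hβpos)]
  -- Markov inequality and assembly
  set V : Ω → ℝ := fun ω => ∑ i : Fin m, if S i ω < that ω ∧ PCtrue i then (1:ℝ) else 0
    with hVdef
  have hV0 : ∀ ω, 0 ≤ V ω := fun ω => Finset.sum_nonneg fun i _ => by positivity
  have hVmeas : Measurable V :=
    Finset.measurable_sum _ fun i _ =>
      Measurable.ite (hSevPC i) measurable_const measurable_const
  have hmarkov : (k : ℝ≥0∞) * μ {ω | (k : ℝ) ≤ V ω} ≤ ∫⁻ ω, ENNReal.ofReal (V ω) ∂μ := by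
    have h := mul_meas_ge_le_lintegral₀ (μ := μ)
      (hVmeas.ennreal_ofReal).aemeasurable (k : ℝ≥0∞)
    have hset : {ω | (k : ℝ≥0∞) ≤ ENNReal.ofReal (V ω)} = {ω | (k : ℝ) ≤ V ω} := by
      ext ω
      rw [Set.mem_setOf_eq, Set.mem_setOf_eq, ← ENNReal.ofReal_natCast k,
        ENNReal.ofReal_le_ofReal_iff (hV0 ω)]
    rwa [hset] at h
  have hVint : ∫⁻ ω, ENNReal.ofReal (V ω) ∂μ
      = ∑ i : Fin m, μ {ω | S i ω < that ω ∧ PCtrue i} := by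
    have hptw : ∀ ω, ENNReal.ofReal (V ω) = ∑ i : Fin m,
        ({ω | S i ω < that ω ∧ PCtrue i}).indicator (fun _ => (1:ℝ≥0∞)) ω := by
      intro ω
      rw [hVdef]
      rw [ENNReal.ofReal_sum_of_nonneg (fun i _ => by positivity)]
      refine Finset.sum_congr rfl fun i _ => ?_
      by_cases h : S i ω < that ω ∧ PCtrue i
      · rw [if_pos h, Set.indicator_of_mem (show ω ∈ _ from h), ENNReal.ofReal_one]
      · rw [if_neg h, Set.indicator_of_notMem (show ω ∉ _ from h), ENNReal.ofReal_zero]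
    rw [lintegral_congr hptw,
      lintegral_finset_sum _ (fun i _ => measurable_const.indicator (hSevPC i))]
    exact Finset.sum_congr rfl fun i _ => lintegral_indicator_one (hSevPC i)
  -- sum up the per-feature bounds
  have hsum : ∑ i : Fin m, μ {ω | S i ω < that ω ∧ PCtrue i}
      ≤ ∫⁻ ω, ENNReal.ofReal (that ω) * ∑ i : Fin m,
          ({ω | F i ω < that ω ∧ PCtrue i}).indicator (fun _ => (1:ℝ≥0∞)) ω ∂μ := by
    calc ∑ i : Fin m, μ {ω | S i ω < that ω ∧ PCtrue i}
        ≤ ∑ i : Fin m, ∫⁻ ω, ENNReal.ofReal (that ω) *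
            ({ω | F i ω < that ω ∧ PCtrue i}).indicator (fun _ => (1:ℝ≥0∞)) ω ∂μ :=
          Finset.sum_le_sum fun i _ => hmain i
      _ = ∫⁻ ω, ∑ i : Fin m, ENNReal.ofReal (that ω) *
            ({ω | F i ω < that ω ∧ PCtrue i}).indicator (fun _ => (1:ℝ≥0∞)) ω ∂μ :=
          (lintegral_finset_sum _ (fun i _ => (hthatmeas.ennreal_ofReal).mul
            (measurable_const.indicator (hFevPC i)))).symm
      _ = ∫⁻ ω, ENNReal.ofReal (that ω) * ∑ i : Fin m,
            ({ω | F i ω < that ω ∧ PCtrue i}).indicator (fun _ => (1:ℝ≥0∞)) ω ∂μ := by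
          congr 1
          funext ω
          rw [Finset.mul_sum]
  -- pointwise comparison with K * π₀
  have hπval : ∀ ω, π₀ ω = (∑ i : Fin m, if F i ω < that ω ∧ PCtrue i then (1:ℝ) else 0) /
      (∑ i : Fin m, if F i ω < that ω then (1:ℝ) else 0) := hπ₀
  have hptwise : ∀ ω, ENNReal.ofReal (that ω) * (∑ i : Fin m,
      ({ω | F i ω < that ω ∧ PCtrue i}).indicator (fun _ => (1:ℝ≥0∞)) ω)
      ≤ ENNReal.ofReal (K * π₀ ω) := by
    intro ω
    set cnt : ℝ := ∑ i : Fin m, if F i ω < that ω ∧ PCtrue i then (1:ℝ) else 0 with hcntdef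
    set Nr : ℝ := ∑ i : Fin m, if F i ω < that ω then (1:ℝ) else 0 with hNrdef
    have hsumInd : (∑ i : Fin m,
        ({ω | F i ω < that ω ∧ PCtrue i}).indicator (fun _ => (1:ℝ≥0∞)) ω)
        = ENNReal.ofReal cnt := by
      rw [hcntdef, ENNReal.ofReal_sum_of_nonneg (fun i _ => by positivity)]
      refine Finset.sum_congr rfl fun i _ => ?_
      by_cases h : F i ω < that ω ∧ PCtrue i
      · rw [if_pos h, Set.indicator_of_mem (show ω ∈ _ from h), ENNReal.ofReal_one]
      · rw [if_neg h, Set.indicator_of_notMem (show ω ∉ _ from h), ENNReal.ofReal_zero]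
    rw [hsumInd, ← ENNReal.ofReal_mul (hthat0 ω)]
    apply ENNReal.ofReal_le_ofReal
    have hcnt0 : 0 ≤ cnt := Finset.sum_nonneg fun i _ => by positivity
    have hNr0 : 0 ≤ Nr := Finset.sum_nonneg fun i _ => by positivity
    have hcntNr : cnt ≤ Nr := by
      rw [hcntdef, hNrdef]
      refine Finset.sum_le_sum fun i _ => ?_
      by_cases h : F i ω < that ω ∧ PCtrue i
      · simp [h, h.1]
      · simp only [if_neg h]
        positivity
    have hNreq : Nr = Cb ω (that ω) := by rw [hNrdef]
    have hπv : π₀ ω = cnt / Nr := by rw [hπval ω, ← hcntdef, ← hNrdef]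
    rcases eq_or_lt_of_le hNr0 with h0 | hpos
    · have hc0 : cnt = 0 := le_antisymm (h0 ▸ hcntNr) hcnt0
      rw [hc0, mul_zero, hπv, hc0]
      simp
    · have hNrne : Nr ≠ 0 := ne_of_gt hpos
      have hattain' : that ω * Nr ≤ K := by rw [hNreq]; exact hattain ω
      calc that ω * cnt = (that ω * Nr) * (cnt / Nr) := by
            field_simp
        _ ≤ K * (cnt / Nr) := mul_le_mul_of_nonneg_right hattain' (by positivity)
        _ = K * π₀ ω := by rw [hπv]
  -- π₀ integrability
  have hπmeas : Measurable π₀ := by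
    have : π₀ = fun ω => (∑ i : Fin m, if F i ω < that ω ∧ PCtrue i then (1:ℝ) else 0) /
        (∑ i : Fin m, if F i ω < that ω then (1:ℝ) else 0) := funext hπval
    rw [this]
    exact Measurable.div
      (Finset.measurable_sum _ fun i _ =>
        Measurable.ite (hFevPC i) measurable_const measurable_const)
      (Finset.measurable_sum _ fun i _ =>
        Measurable.ite (hFev i) measurable_const measurable_const)
  have hπnn : ∀ ω, 0 ≤ π₀ ω := by
    intro ω
    rw [hπval ω]
    positivity
  have hπle1 : ∀ ω, π₀ ω ≤ 1 := by
    intro ω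
    rw [hπval ω]
    have hcnt0 : (0:ℝ) ≤ ∑ i : Fin m, if F i ω < that ω ∧ PCtrue i then (1:ℝ) else 0 :=
      Finset.sum_nonneg fun i _ => by positivity
    have hcntNr : (∑ i : Fin m, if F i ω < that ω ∧ PCtrue i then (1:ℝ) else 0)
        ≤ ∑ i : Fin m, if F i ω < that ω then (1:ℝ) else 0 := by
      refine Finset.sum_le_sum fun i _ => ?_
      by_cases h : F i ω < that ω ∧ PCtrue i
      · simp [h, h.1]
      · simp only [if_neg h]
        positivity
    rcases eq_or_lt_of_le (Finset.sum_nonneg (fun i (_ : i ∈ univ) => by positivity :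
        ∀ i ∈ univ, 0 ≤ if F i ω < that ω then (1:ℝ) else 0)) with h0 | hpos
    · rw [← h0, div_zero]; exact zero_le_one
    · rw [div_le_one hpos]; exact hcntNr
  have hπint : Integrable π₀ μ := by
    refine (integrable_const (1:ℝ)).mono' hπmeas.aestronglyMeasurable ?_
    refine ae_of_all _ fun ω => ?_
    rw [Real.norm_eq_abs, abs_of_nonneg (hπnn ω)]
    exact hπle1 ω
  have hlintπ : ∫⁻ ω, ENNReal.ofReal (K * π₀ ω) ∂μ
      = ENNReal.ofReal K * ENNReal.ofReal (∫ ω, π₀ ω ∂μ) := by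
    have h1 : ∀ ω, ENNReal.ofReal (K * π₀ ω) = ENNReal.ofReal K * ENNReal.ofReal (π₀ ω) :=
      fun ω => ENNReal.ofReal_mul hK
    rw [lintegral_congr h1, lintegral_const_mul _ hπmeas.ennreal_ofReal,
      ← ofReal_integral_eq_lintegral_ofReal hπint (ae_of_all _ hπnn)]
  have hfin : (k : ℝ≥0∞) * μ {ω | (k : ℝ) ≤ V ω}
      ≤ (k : ℝ≥0∞) * ENNReal.ofReal (α * ∫ ω, π₀ ω ∂μ) := by
    calc (k : ℝ≥0∞) * μ {ω | (k : ℝ) ≤ V ω}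
        ≤ ∫⁻ ω, ENNReal.ofReal (V ω) ∂μ := hmarkov
      _ = ∑ i : Fin m, μ {ω | S i ω < that ω ∧ PCtrue i} := hVint
      _ ≤ ∫⁻ ω, ENNReal.ofReal (that ω) * ∑ i : Fin m,
            ({ω | F i ω < that ω ∧ PCtrue i}).indicator (fun _ => (1:ℝ≥0∞)) ω ∂μ := hsum
      _ ≤ ∫⁻ ω, ENNReal.ofReal (K * π₀ ω) ∂μ := lintegral_mono hptwise
      _ = ENNReal.ofReal K * ENNReal.ofReal (∫ ω, π₀ ω ∂μ) := hlintπ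
      _ = (k : ℝ≥0∞) * ENNReal.ofReal (α * ∫ ω, π₀ ω ∂μ) := by
          rw [hKdef, ENNReal.ofReal_mul (Nat.cast_nonneg k), ENNReal.ofReal_natCast,
            mul_assoc, ← ENNReal.ofReal_mul hα0]
  have hk0 : (k : ℝ≥0∞) ≠ 0 := by
    simp only [ne_eq, Nat.cast_eq_zero]
    omega
  exact (ENNReal.mul_le_mul_iff_right hk0 (ENNReal.natCast_ne_top k)).mp hfin
end

section
/- Let S_1,...,S_m, F_1,...,F_m ∈ [0,1] with F_i ≤ S_i for all i, and τ̂ = sup{ τ ∈ [0,1] : (Σ_i 1{t̂_θ ≤ S_i ≤ τ} + k) / max(1, Σ_i 1{S_i ≤ τ}) ≤ γ } for a fixed threshold t̂_θ ∈ [0,1], k ∈ ℕ, γ ∈ (0,1). Suppose τ̂ is attained, i.e., the defining inequality holds at τ = τ̂. Then the event { (Σ_i 1{S_i ≤ τ̂}·1{H_i true}) / max(1, Σ_i 1{S_i ≤ τ̂}) ≥ γ } is contained in the event { Σ_i 1{S_i < t̂_θ}·1{H_i true} ≥ k }, so the FDX of the rejection set R = {i : S_i ≤ τ̂} at level γ is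 at most the k-FWER of the set {i : S_i < t̂_θ}. -/
open MeasureTheory Finset

/-- Augmentation step: the FDX event of the augmented rejection set
`{i : S_i ≤ τ̂}` is contained in the `k`-FWER event of `{i : S_i < t̂_θ}`,
hence FDX ≤ k-FWER. -/
theorem stmt_9 {Ω : Type*} [MeasurableSpace Ω] (μ : Measure Ω)
    [IsProbabilityMeasure μ] (m : ℕ) (hm : 1 ≤ m)
    (S F : Fin m → Ω → ℝ)
    (hS : ∀ i ω, S i ω ∈ Set.Icc (0:ℝ) 1) (hF : ∀ i ω, F i ω ∈ Set.Icc (0:ℝ) 1)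
    (hFS : ∀ i ω, F i ω ≤ S i ω)
    (trueH : Fin m → Prop) [DecidablePred trueH]
    (tθ : Ω → ℝ) (htθ : ∀ ω, tθ ω ∈ Set.Icc (0:ℝ) 1)
    (k : ℕ) (hk : 1 ≤ k) (γ : ℝ) (hγ : γ ∈ Set.Ioo (0:ℝ) 1)
    (τ : Ω → ℝ)
    (hτ : ∀ ω, τ ω = sSup {x : ℝ | x ∈ Set.Icc (0:ℝ) 1 ∧
        ((∑ i : Fin m, (if tθ ω ≤ S i ω ∧ S i ω ≤ x then (1:ℝ) else 0)) + k) /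
          max 1 (∑ i : Fin m, (if S i ω ≤ x then (1:ℝ) else 0)) ≤ γ})
    (hattained : ∀ ω,
        ((∑ i : Fin m, (if tθ ω ≤ S i ω ∧ S i ω ≤ τ ω then (1:ℝ) else 0)) + k) /
          max 1 (∑ i : Fin m, (if S i ω ≤ τ ω then (1:ℝ) else 0)) ≤ γ) :
    {ω | γ ≤ (∑ i : Fin m, (if S i ω ≤ τ ω ∧ trueH i then (1:ℝ) else 0)) /
          max 1 (∑ i : Fin m, (if S i ω ≤ τ ω then (1:ℝ) else 0))} ⊆
      {ω | (k : ℝ) ≤ ∑ i : Fin m, (if S i ω < tθ ω ∧ trueH i then (1:ℝ) else 0)} ∧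
    μ {ω | γ ≤ (∑ i : Fin m, (if S i ω ≤ τ ω ∧ trueH i then (1:ℝ) else 0)) /
          max 1 (∑ i : Fin m, (if S i ω ≤ τ ω then (1:ℝ) else 0))} ≤
      μ {ω | (k : ℝ) ≤ ∑ i : Fin m, (if S i ω < tθ ω ∧ trueH i then (1:ℝ) else 0)} := by

  have hsub : {ω | γ ≤ (∑ i : Fin m, (if S i ω ≤ τ ω ∧ trueH i then (1:ℝ) else 0)) /
          max 1 (∑ i : Fin m, (if S i ω ≤ τ ω then (1:ℝ) else 0))} ⊆
      {ω | (k : ℝ) ≤ ∑ i : Fin m, (if S i ω < tθ ω ∧ trueH i then (1:ℝ) else 0)} := by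
    intro ω hω
    simp only [Set.mem_setOf_eq] at hω ⊢
    set D : ℝ := max 1 (∑ i : Fin m, (if S i ω ≤ τ ω then (1:ℝ) else 0)) with hD
    have hDpos : (0:ℝ) < D := lt_of_lt_of_le zero_lt_one (le_max_left _ _)
    have h1 := hattained ω
    have h2 : (∑ i : Fin m, (if tθ ω ≤ S i ω ∧ S i ω ≤ τ ω then (1:ℝ) else 0)) + k ≤ γ * D :=
      (div_le_iff₀ hDpos).mp h1
    have h3 : γ * D ≤ ∑ i : Fin m, (if S i ω ≤ τ ω ∧ trueH i then (1:ℝ) else 0) :=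
      (le_div_iff₀ hDpos).mp hω
    have h4 : (∑ i : Fin m, (if S i ω ≤ τ ω ∧ trueH i then (1:ℝ) else 0)) ≤
        (∑ i : Fin m, (if tθ ω ≤ S i ω ∧ S i ω ≤ τ ω then (1:ℝ) else 0)) +
        (∑ i : Fin m, (if S i ω < tθ ω ∧ trueH i then (1:ℝ) else 0)) := by
      rw [← Finset.sum_add_distrib]
      apply Finset.sum_le_sum
      intro i _
      by_cases h : S i ω ≤ τ ω ∧ trueH i
      · rcases h with ⟨ha, hb⟩
        by_cases hc : tθ ω ≤ S i ω
        · simp [ha, hb, hc]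
          positivity
        · push_neg at hc
          simp [ha, hb, hc]
          split <;> norm_num
      · simp [h]
        positivity
    linarith
  exact ⟨hsub, measure_mono hsub⟩
end

section
/- Let θ ∈ (0,1), t ∈ (0,1], π_0, π_1 ≥ 0 with π_0 + π_1 > 0, and let F̃_0, F̃_1, S̃_0, S̃_1 : (0,1] → [0,∞) satisfy: S̃_1(θt) ≤ F̃_1(t), and S̃_0(θt) ≤ θt·F̃_0(t). Define F̃(t) = π_0 F̃_0(t) + π_1 F̃_1(t) and S̃(θt) = π_0 S̃_0(θt) + π_1 S̃_1(θt), and assume F̃(t) > 0. Then (F̃(t) − S̃(θt)) / ((1 − θt)·F̃(t)) ≥ π_0 F̃_0(t) / F̃(t). -/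
/-- Deterministic inequality underlying the consistency of the post-filter
null proportion estimator. -/
theorem stmt_13 (θ t π₀ π₁ : ℝ) (F₀ F₁ S₀ S₁ : ℝ → ℝ)
    (hθ : θ ∈ Set.Ioo (0:ℝ) 1) (ht : t ∈ Set.Ioc (0:ℝ) 1)
    (hπ₀ : 0 ≤ π₀) (hπ₁ : 0 ≤ π₁) (hπ : 0 < π₀ + π₁)
    (hF₀ : 0 ≤ F₀ t) (hF₁ : 0 ≤ F₁ t) (hS₀ : 0 ≤ S₀ (θ * t)) (hS₁ : 0 ≤ S₁ (θ * t))
    (h1 : S₁ (θ * t) ≤ F₁ t) (h0 : S₀ (θ * t) ≤ θ * t * F₀ t)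
    (hFpos : 0 < π₀ * F₀ t + π₁ * F₁ t) :
    π₀ * F₀ t / (π₀ * F₀ t + π₁ * F₁ t) ≤
      ((π₀ * F₀ t + π₁ * F₁ t) - (π₀ * S₀ (θ * t) + π₁ * S₁ (θ * t))) /
        ((1 - θ * t) * (π₀ * F₀ t + π₁ * F₁ t)) := by
  obtain ⟨hθ0, hθ1⟩ := hθ
  obtain ⟨ht0, ht1⟩ := ht
  have hθt : θ * t < 1 := by nlinarith
  have hden : 0 < (1 - θ * t) * (π₀ * F₀ t + π₁ * F₁ t) := mul_pos (by linarith) hFpos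
  rw [div_le_div_iff₀ hFpos hden]
  nlinarith [mul_le_mul_of_nonneg_left h0 hπ₀, mul_le_mul_of_nonneg_left h1 hπ₁]
end
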